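/- Correctness of the null-space method: let Q be a real orthogonal n×n matrix and R an invertible m×m upper triangular matrix with A = [0 R] Q (where [0 R] is the m×n matrix whose first n−m columns are zero and last m columns are R). Set B̃ = Q B Qᵀ, b̃ = Q b, and for x ∈ ℝⁿ set x̃ = Q x with block components x̃₁ ∈ ℝ^{n−m}, x̃₂ ∈ ℝ^m, and partition B̃ and b̃ conformally. Then (x, y) solves the KKT system if and only if R x̃₂ = c, B̃₁₁ x̃₁ + B̃₁₂ x̃₂ = b̃₁, and Rᵀ y = b̃₂ − B̃₂₁ x̃₁ − B̃₂₂ x̃₂. -/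

import Mathlib

open Matrix

/-- Correctness of the null-space method: if `A = [0 R] Q` with `Q` orthogonal and
`R` invertible upper triangular, and `B̃ = Q B Qᵀ`, `b̃ = Q b`, `x̃ = Q x` are
partitioned conformally into the first `n - m` and last `m` components, then
`(x, y)` solves the KKT system iff `R x̃₂ = c`, `B̃₁₁ x̃₁ + B̃₁₂ x̃₂ = b̃₁`, and
`Rᵀ y = b̃₂ - B̃₂₁ x̃₁ - B̃₂₂ x̃₂`. -/
theorem null_space_method_correct
    (m n : ℕ) (hmn : m ≤ n)
    (B : Matrix (Fin n) (Fin n) ℝ) (hB : Bᵀ = B)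
    (A : Matrix (Fin m) (Fin n) ℝ)
    (b : Fin n → ℝ) (c : Fin m → ℝ)
    (Q : Matrix (Fin n) (Fin n) ℝ) (hQ : Qᵀ * Q = 1)
    (R : Matrix (Fin m) (Fin m) ℝ)
    (hRinv : IsUnit R.det)
    (hRtri : ∀ i j : Fin m, (j : ℕ) < (i : ℕ) → R i j = 0)
    (hA : A = (fromCols (0 : Matrix (Fin m) (Fin (n - m)) ℝ) R).submatrix id
        (fun k : Fin n => finSumFinEquiv.symm (Fin.cast (by omega) k)) * Q)
    (x : Fin n → ℝ) (y : Fin m → ℝ) :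
    let e₁ : Fin (n - m) → Fin n := fun j => Fin.cast (by omega) (Fin.castAdd m j)
    let e₂ : Fin m → Fin n := fun j => Fin.cast (by omega) (Fin.natAdd (n - m) j)
    let Bt : Matrix (Fin n) (Fin n) ℝ := Q * B * Qᵀ
    let bt : Fin n → ℝ := Q *ᵥ b
    let xt : Fin n → ℝ := Q *ᵥ x
    ((B *ᵥ x + Aᵀ *ᵥ y = b ∧ A *ᵥ x = c) ↔
      (R *ᵥ (fun j => xt (e₂ j)) = c ∧
       (Bt.submatrix e₁ e₁) *ᵥ (fun j => xt (e₁ j)) +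
         (Bt.submatrix e₁ e₂) *ᵥ (fun j => xt (e₂ j)) = (fun j => bt (e₁ j)) ∧
       Rᵀ *ᵥ y = (fun j => bt (e₂ j)) -
         (Bt.submatrix e₂ e₁) *ᵥ (fun j => xt (e₁ j)) -
         (Bt.submatrix e₂ e₂) *ᵥ (fun j => xt (e₂ j)))) := by
  intro e₁ e₂ Bt bt xt
  have hnm : n - m + m = n := by omega
  set σ : Fin n → Fin (n - m) ⊕ Fin m :=
    fun k : Fin n => finSumFinEquiv.symm (Fin.cast hnm.symm k) with hσdef
  set M : Matrix (Fin m) (Fin n) ℝ :=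
    (fromCols (0 : Matrix (Fin m) (Fin (n - m)) ℝ) R).submatrix id σ with hMdef
  have hA' : A = M * Q := hA
  set E : (Fin (n - m) ⊕ Fin m) ≃ Fin n := finSumFinEquiv.trans (finCongr hnm) with hEdef
  have hE1 : ∀ j : Fin (n - m), E (Sum.inl j) = e₁ j := by
    intro j
    show E (Sum.inl j) = Fin.cast hnm (Fin.castAdd m j)
    simp [hEdef]
  have hE2 : ∀ j : Fin m, E (Sum.inr j) = e₂ j := by
    intro j
    show E (Sum.inr j) = Fin.cast hnm (Fin.natAdd (n - m) j)
    simp [hEdef]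
  have hσ1 : ∀ j : Fin (n - m), σ (e₁ j) = Sum.inl j := by
    intro j
    simp only [hσdef]
    rw [show Fin.cast hnm.symm (e₁ j) = Fin.castAdd m j from by
      show Fin.cast hnm.symm (Fin.cast hnm (Fin.castAdd m j)) = Fin.castAdd m j
      ext; simp]
    simp
  have hσ2 : ∀ j : Fin m, σ (e₂ j) = Sum.inr j := by
    intro j
    simp only [hσdef]
    rw [show Fin.cast hnm.symm (e₂ j) = Fin.natAdd (n - m) j from by
      show Fin.cast hnm.symm (Fin.cast hnm (Fin.natAdd (n - m) j)) = Fin.natAdd (n - m) j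
      ext; simp]
    simp
  have hM1 : ∀ (i : Fin m) (j : Fin (n - m)), M i (e₁ j) = 0 := by
    intro i j
    simp [hMdef, hσ1 j, fromCols]
  have hM2 : ∀ (i : Fin m) (j : Fin m), M i (e₂ j) = R i j := by
    intro i j
    simp [hMdef, hσ2 j, fromCols]
  have hQQ : Q * Qᵀ = 1 := mul_eq_one_comm.mp hQ
  have forall_split : ∀ (p : Fin n → Prop),
      (∀ k, p k) ↔ ((∀ j, p (e₁ j)) ∧ (∀ j, p (e₂ j))) := by
    intro p
    constructor
    · exact fun h => ⟨fun j => h _, fun j => h _⟩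
    · rintro ⟨h1, h2⟩ k
      obtain ⟨s, hs⟩ := E.surjective k
      cases s with
      | inl j => rw [← hs, hE1]; exact h1 j
      | inr j => rw [← hs, hE2]; exact h2 j
  have hax : A *ᵥ x = R *ᵥ (fun j => xt (e₂ j)) := by
    have h0 : A *ᵥ x = M *ᵥ xt := by rw [hA', ← mulVec_mulVec]
    rw [h0]
    funext i
    simp only [mulVec, dotProduct]
    rw [← E.sum_comp (fun k => M i k * xt k), Fintype.sum_sum_type]
    simp only [hE1, hE2, hM1, hM2, zero_mul, Finset.sum_const_zero, zero_add]
  have hmain : (B *ᵥ x + Aᵀ *ᵥ y = b) ↔ (Bt *ᵥ xt + Mᵀ *ᵥ y = bt) := by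
    have h1 : Q *ᵥ (B *ᵥ x + Aᵀ *ᵥ y) = Bt *ᵥ xt + Mᵀ *ᵥ y := by
      rw [mulVec_add]
      congr 1
      · show Q *ᵥ (B *ᵥ x) = (Q * B * Qᵀ) *ᵥ (Q *ᵥ x)
        rw [mulVec_mulVec, mulVec_mulVec, mul_assoc (Q * B), hQ, mul_one]
      · rw [hA', transpose_mul, mulVec_mulVec, ← Matrix.mul_assoc, hQQ, Matrix.one_mul]
    constructor
    · intro h
      rw [← h1, h]
    · intro h
      have h2 : Q *ᵥ (B *ᵥ x + Aᵀ *ᵥ y) = Q *ᵥ b := by rw [h1, h]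
      have h3 := congrArg (fun u => Qᵀ *ᵥ u) h2
      simpa [mulVec_mulVec, hQ, one_mulVec] using h3
  have hBtsum : ∀ k, (Bt *ᵥ xt) k =
      (∑ j, Bt k (e₁ j) * xt (e₁ j)) + (∑ j, Bt k (e₂ j) * xt (e₂ j)) := by
    intro k
    simp only [mulVec, dotProduct]
    rw [← E.sum_comp (fun l => Bt k l * xt l), Fintype.sum_sum_type]
    simp only [hE1, hE2]
  have hMt1 : ∀ j, (Mᵀ *ᵥ y) (e₁ j) = 0 := by
    intro j; simp [mulVec, dotProduct, transpose_apply, hM1]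
  have hMt2 : ∀ j, (Mᵀ *ᵥ y) (e₂ j) = (Rᵀ *ᵥ y) j := by
    intro j; simp [mulVec, dotProduct, transpose_apply, hM2]
  have comp1 : ∀ j, ((Bt *ᵥ xt + Mᵀ *ᵥ y) (e₁ j) = bt (e₁ j)) ↔
      (((Bt.submatrix e₁ e₁) *ᵥ (fun j => xt (e₁ j)) +
        (Bt.submatrix e₁ e₂) *ᵥ (fun j => xt (e₂ j))) j = bt (e₁ j)) := by
    intro j
    rw [Pi.add_apply, hBtsum, hMt1, add_zero]
    simp [mulVec, dotProduct, submatrix_apply]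
  have comp2 : ∀ j, ((Bt *ᵥ xt + Mᵀ *ᵥ y) (e₂ j) = bt (e₂ j)) ↔
      ((Rᵀ *ᵥ y) j = ((fun j => bt (e₂ j)) -
        (Bt.submatrix e₂ e₁) *ᵥ (fun j => xt (e₁ j)) -
        (Bt.submatrix e₂ e₂) *ᵥ (fun j => xt (e₂ j))) j) := by
    intro j
    rw [Pi.add_apply, hBtsum, hMt2]
    simp only [Pi.sub_apply, mulVec, dotProduct, submatrix_apply]
    constructor <;> intro h <;> linarith
  have hmain2 : (B *ᵥ x + Aᵀ *ᵥ y = b) ↔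
      ((Bt.submatrix e₁ e₁) *ᵥ (fun j => xt (e₁ j)) +
         (Bt.submatrix e₁ e₂) *ᵥ (fun j => xt (e₂ j)) = (fun j => bt (e₁ j)) ∧
       Rᵀ *ᵥ y = (fun j => bt (e₂ j)) -
         (Bt.submatrix e₂ e₁) *ᵥ (fun j => xt (e₁ j)) -
         (Bt.submatrix e₂ e₂) *ᵥ (fun j => xt (e₂ j))) :=
    hmain.trans <| funext_iff.trans <| (forall_split _).trans <|
      and_congr ((forall_congr' comp1).trans funext_iff.symm)
                ((forall_congr' comp2).trans funext_iff.symm)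
  constructor
  · rintro ⟨h1, h2⟩
    have h3 := hmain2.mp h1
    exact ⟨by rw [← hax, h2], h3.1, h3.2⟩
  · rintro ⟨g1, g2, g3⟩
    exact ⟨hmain2.mpr ⟨g2, g3⟩, by rw [hax, g1]⟩
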